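/- Let x₀ ∈ ℝ³, let e ∈ S²₁, and let z* ∈ H² with B(z*, e) = 0 (z* lies on the geodesic line represented by e). If the function z ↦ B(z, x₀) restricted to the line {z ∈ H² : B(z, e) = 0} attains a local maximum or a local minimum at z*, then B(z*, x₀)² = B(e, x₀)² − B(x₀, x₀). (This is the computation underlying the fact that geodesic lines e₁, …, eₙ are tangent to a common equidistant curve of x₀ — a circle, horocycle, or equidistant line according to whether x₀ is timelike, lightlike, or spacelike — if and only if |B(e₁,x₀)| = ⋯ = |B(eₙ,x₀)|.) -/

import Mathlib

/-- The Lorentz bilinear form on ℝ³: B(x,y) = −x⁰y⁰ + x¹y¹ + x²y². -/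
noncomputable def lorentzB (x y : Fin 3 → ℝ) : ℝ :=
  -(x 0 * y 0) + x 1 * y 1 + x 2 * y 2

/-- The hyperboloid model H² = {x : B(x,x) = −1, x⁰ > 0}. -/
def hyperboloid : Set (Fin 3 → ℝ) :=
  {x | lorentzB x x = -1 ∧ 0 < x 0}

/-- The de Sitter sphere S²₁ = {x : B(x,x) = 1}. -/
def deSitter : Set (Fin 3 → ℝ) :=
  {x | lorentzB x x = 1}

/-- Auxiliary: if `w` is a unit spacelike vector orthogonal to `zstar` and `e`,
then a local extremum of `z ↦ B(z,x₀)` on the line at `zstar` forces `B(w,x₀) = 0`. -/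
theorem aux_deriv_zero (x₀ e zstar w : Fin 3 → ℝ)
    (hzz : lorentzB zstar zstar = -1) (hz0 : 0 < zstar 0)
    (hze : lorentzB zstar e = 0)
    (hwz : lorentzB w zstar = 0) (hwe : lorentzB w e = 0) (hww : lorentzB w w = 1)
    (hext : IsLocalMaxOn (fun z : Fin 3 → ℝ => lorentzB z x₀)
        {z | z ∈ hyperboloid ∧ lorentzB z e = 0} zstar ∨
      IsLocalMinOn (fun z : Fin 3 → ℝ => lorentzB z x₀)
        {z | z ∈ hyperboloid ∧ lorentzB z e = 0} zstar) :
    lorentzB w x₀ = 0 := by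
  set S : Set (Fin 3 → ℝ) := {z | z ∈ hyperboloid ∧ lorentzB z e = 0} with hS
  set γ : ℝ → Fin 3 → ℝ := fun t i => Real.cosh t * zstar i + Real.sinh t * w i with hγ
  have hγcont : Continuous γ := by
    apply continuous_pi
    intro i
    exact (Real.continuous_cosh.mul continuous_const).add
      (Real.continuous_sinh.mul continuous_const)
  have hγ0 : γ 0 = zstar := by
    funext i
    simp [hγ]
  -- coordinate 0 is eventually positive
  have hc0 : Continuous fun t => γ t 0 := by
    exact (Real.continuous_cosh.mul continuous_const).add
      (Real.continuous_sinh.mul continuous_const)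
  have hpos : ∀ᶠ t in nhds (0:ℝ), 0 < γ t 0 := by
    have h0 : γ 0 0 = zstar 0 := by rw [hγ0]
    have := (hc0.tendsto 0).eventually (eventually_gt_nhds (by rw [h0]; exact hz0))
    exact this
  have hmem : ∀ᶠ t in nhds (0:ℝ), γ t ∈ S := by
    filter_upwards [hpos] with t ht
    refine ⟨⟨?_, ht⟩, ?_⟩
    · show lorentzB (γ t) (γ t) = -1
      simp only [lorentzB, hγ] at *
      linear_combination (Real.cosh t)^2 * hzz + 2 * Real.cosh t * Real.sinh t * hwz +
        (Real.sinh t)^2 * hww - Real.cosh_sq_sub_sinh_sq t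
    · show lorentzB (γ t) e = 0
      simp only [lorentzB, hγ] at *
      linear_combination Real.cosh t * hze + Real.sinh t * hwe
  have htend : Filter.Tendsto γ (nhds 0) (nhdsWithin zstar S) := by
    rw [tendsto_nhdsWithin_iff]
    constructor
    · have := hγcont.tendsto 0
      rwa [hγ0] at this
    · exact hmem
  set g : ℝ → ℝ := fun t => Real.cosh t * lorentzB zstar x₀ + Real.sinh t * lorentzB w x₀
    with hg
  have hfg : ∀ t, lorentzB (γ t) x₀ = g t := by
    intro t
    simp only [lorentzB, hγ, hg]
    ring
  have hg0 : g 0 = lorentzB zstar x₀ := by simp [hg]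
  have hgd : HasDerivAt g (lorentzB w x₀) 0 := by
    have h1 := (Real.hasDerivAt_cosh 0).mul_const (lorentzB zstar x₀)
    have h2 := (Real.hasDerivAt_sinh 0).mul_const (lorentzB w x₀)
    have := h1.add h2
    simp at this
    exact this
  rcases hext with h | h
  · have hev : IsLocalMax g 0 := by
      have := htend.eventually h
      filter_upwards [this] with t ht
      rw [← hfg t, ← hg0] at *
      exact ht
    exact hev.hasDerivAt_eq_zero hgd
  · have hev : IsLocalMin g 0 := by
      have := htend.eventually h
      filter_upwards [this] with t ht
      rw [← hfg t, ← hg0] at *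
      exact ht
    exact hev.hasDerivAt_eq_zero hgd

theorem tangency_value_on_line
    (x₀ : Fin 3 → ℝ) (e : Fin 3 → ℝ) (he : e ∈ deSitter)
    (zstar : Fin 3 → ℝ) (hz : zstar ∈ hyperboloid) (hze : lorentzB zstar e = 0)
    (hext : IsLocalMaxOn (fun z : Fin 3 → ℝ => lorentzB z x₀)
        {z | z ∈ hyperboloid ∧ lorentzB z e = 0} zstar ∨
      IsLocalMinOn (fun z : Fin 3 → ℝ => lorentzB z x₀)
        {z | z ∈ hyperboloid ∧ lorentzB z e = 0} zstar) :
    (lorentzB zstar x₀) ^ 2 = (lorentzB e x₀) ^ 2 - lorentzB x₀ x₀ := by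
  obtain ⟨hzz, hz0⟩ := hz
  have hee : lorentzB e e = 1 := he
  set w : Fin 3 → ℝ := ![-(zstar 1 * e 2 - zstar 2 * e 1),
    zstar 2 * e 0 - zstar 0 * e 2, zstar 0 * e 1 - zstar 1 * e 0] with hw
  have hw0 : w 0 = -(zstar 1 * e 2 - zstar 2 * e 1) := rfl
  have hw1 : w 1 = zstar 2 * e 0 - zstar 0 * e 2 := rfl
  have hw2 : w 2 = zstar 0 * e 1 - zstar 1 * e 0 := rfl
  have hwz : lorentzB w zstar = 0 := by
    simp only [lorentzB, hw0, hw1, hw2]; ring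
  have hwe : lorentzB w e = 0 := by
    simp only [lorentzB, hw0, hw1, hw2]; ring
  have hww : lorentzB w w = 1 := by
    simp only [lorentzB, hw0, hw1, hw2]
    simp only [lorentzB] at hzz hee hze
    linear_combination (-(zstar 0 * e 0) + zstar 1 * e 1 + zstar 2 * e 2) * hze -
      (-(e 0 * e 0) + e 1 * e 1 + e 2 * e 2) * hzz + hee
  have hW : lorentzB w x₀ = 0 :=
    aux_deriv_zero x₀ e zstar w hzz hz0 hze hwz hwe hww hext
  simp only [lorentzB, hw0, hw1, hw2] at hW hzz hee hze ⊢
  linear_combination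
    ((-(e 0 * e 0) + e 1 * e 1 + e 2 * e 2) *
        (-(x₀ 0 * x₀ 0) + x₀ 1 * x₀ 1 + x₀ 2 * x₀ 2) -
      (-(e 0 * x₀ 0) + e 1 * x₀ 1 + e 2 * x₀ 2) ^ 2) * hzz +
    (-((-(x₀ 0 * x₀ 0) + x₀ 1 * x₀ 1 + x₀ 2 * x₀ 2) +
        (-(zstar 0 * x₀ 0) + zstar 1 * x₀ 1 + zstar 2 * x₀ 2) ^ 2)) * hee +
    (-(-(zstar 0 * e 0) + zstar 1 * e 1 + zstar 2 * e 2) *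
        (-(x₀ 0 * x₀ 0) + x₀ 1 * x₀ 1 + x₀ 2 * x₀ 2) +
      2 * (-(e 0 * x₀ 0) + e 1 * x₀ 1 + e 2 * x₀ 2) *
        (-(zstar 0 * x₀ 0) + zstar 1 * x₀ 1 + zstar 2 * x₀ 2)) * hze +
    ((zstar 1 * e 2 - zstar 2 * e 1) * x₀ 0 +
      (zstar 2 * e 0 - zstar 0 * e 2) * x₀ 1 +
      (zstar 0 * e 1 - zstar 1 * e 0) * x₀ 2) * hW
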